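/- The number of orbits of the right SL(2,ℤ)-action on the set of 2×2 integer matrices with determinant d (d ≥ 1) equals the divisor sum 𝔇(d) = Σ_{k|d} k. -/

import Mathlib

open Matrix

abbrev SL2 := Matrix.SpecialLinearGroup (Fin 2) ℤ

def mkS (a b c e : ℤ) (h : a * e - b * c = 1) : SL2 :=
  ⟨!![a, b; c, e], by simp [Matrix.det_fin_two_of, h]⟩

@[simp] lemma mkS_coe (a b c e : ℤ) (h : a * e - b * c = 1) :
    (mkS a b c e h : Matrix (Fin 2) (Fin 2) ℤ) = !![a, b; c, e] := rfl

/-- Existence of normal form. -/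
lemma exists_nf (d : ℤ) (hd : 1 ≤ d) :
    ∀ n (M : Matrix (Fin 2) (Fin 2) ℤ), M.det = d → (M 0 1).natAbs = n →
    ∃ (S : SL2) (a b c : ℤ), M * S = !![a, 0; b, c] ∧ 0 < a ∧ 0 ≤ b ∧ b < c := by
  intro n
  induction n using Nat.strong_induction_on with
  | _ n ih =>
    intro M hM hn
    by_cases h01 : M 0 1 = 0
    · -- M is already lower triangular
      have hEta := Matrix.eta_fin_two M
      have hdet : M 0 0 * M 1 1 = d := by
        rw [Matrix.det_fin_two] at hM; rw [h01] at hM; linarith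
      have ha0 : M 0 0 ≠ 0 := by
        intro h; rw [h] at hdet; simp at hdet; omega
      set s : ℤ := if 0 < M 0 0 then 1 else -1 with hs
      have hss : s * s = 1 := by rcases ite_eq_or_eq (0 < M 0 0) (1:ℤ) (-1) with h | h <;>
        rw [hs, h] <;> ring
      have ha : 0 < M 0 0 * s := by
        rcases lt_or_ge 0 (M 0 0) with h | h
        · simp [hs, if_pos h]; exact h
        · have : M 0 0 < 0 := lt_of_le_of_ne h ha0
          simp [hs, if_neg (not_lt.mpr h)]; omega
      set a := M 0 0 * s with hadef
      set c := M 1 1 * s with hcdef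
      have hac : a * c = d := by rw [hadef, hcdef]; nlinarith [hdet]
      have hc : 0 < c := by nlinarith
      set u : ℤ := -s * ((M 1 0 * s) / c) with hu
      have e10 : M 1 0 * s + M 1 1 * u = (M 1 0 * s) % c := by
        have h11 : M 1 1 = c * s := by rw [hcdef]; linear_combination (-(M 1 1)) * hss
        rw [h11, hu, Int.emod_def]
        linear_combination (-(c * ((M 1 0 * s) / c))) * hss
      refine ⟨mkS s 0 u s (by nlinarith), a, (M 1 0 * s) % c, c, ?_, ha,
        Int.emod_nonneg _ hc.ne', Int.emod_lt_of_pos _ hc⟩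
      rw [mkS_coe]
      nth_rewrite 1 [hEta]
      rw [Matrix.mul_fin_two, h01]
      ext i j
      fin_cases i <;> fin_cases j <;> simp [hadef, hcdef]
      exact e10
    · set q := M 0 0 / M 0 1 with hq
      set S₀ : SL2 := mkS 0 1 (-1) (-q) (by ring) with hS0
      set M' := M * (S₀ : Matrix (Fin 2) (Fin 2) ℤ) with hM'
      have hM'det : M'.det = d := by
        rw [hM', Matrix.det_mul, S₀.prop, mul_one, hM]
      have h01new : M' 0 1 = M 0 0 % M 0 1 := by
        rw [hM', hS0]
        simp [Matrix.mul_apply, Fin.sum_univ_two, Int.emod_def, hq]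
        ring
      have hlt : (M' 0 1).natAbs < n := by
        have h1 := Int.emod_nonneg (M 0 0) h01
        have h2 := Int.emod_lt (M 0 0) h01
        rw [h01new]
        omega
      obtain ⟨S, a, b, c, hS, ha, hb, hbc⟩ := ih _ hlt M' hM'det rfl
      exact ⟨S₀ * S, a, b, c, by
        rw [Matrix.SpecialLinearGroup.coe_mul, ← Matrix.mul_assoc, ← hM', hS], ha, hb, hbc⟩

lemma nf_unique {a b c a' b' c' : ℤ} (S : SL2)
    (ha : 0 < a) (hb : 0 ≤ b) (hbc : b < c) (ha' : 0 < a') (hb' : 0 ≤ b') (hbc' : b' < c')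
    (h : !![a, 0; b, c] * (S : Matrix (Fin 2) (Fin 2) ℤ) = !![a', 0; b', c']) :
    a = a' ∧ b = b' ∧ c = c' := by
  have hdetS : (S : Matrix (Fin 2) (Fin 2) ℤ) 0 0 * (S : Matrix (Fin 2) (Fin 2) ℤ) 1 1
      - (S : Matrix (Fin 2) (Fin 2) ℤ) 0 1 * (S : Matrix (Fin 2) (Fin 2) ℤ) 1 0 = 1 := by
    have := S.prop; rwa [Matrix.det_fin_two] at this
  set s := (S : Matrix (Fin 2) (Fin 2) ℤ) 0 0
  set t := (S : Matrix (Fin 2) (Fin 2) ℤ) 0 1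
  set u := (S : Matrix (Fin 2) (Fin 2) ℤ) 1 0
  set v := (S : Matrix (Fin 2) (Fin 2) ℤ) 1 1
  rw [Matrix.eta_fin_two (S : Matrix (Fin 2) (Fin 2) ℤ), Matrix.mul_fin_two] at h
  have e00 : a * s = a' := by simpa using congrFun (congrFun h 0) 0
  have e01 : a * t = 0 := by simpa using congrFun (congrFun h 0) 1
  have e10 : b * s + c * u = b' := by simpa using congrFun (congrFun h 1) 0
  have e11 : b * t + c * v = c' := by simpa using congrFun (congrFun h 1) 1
  have ht : t = 0 := by
    rcases mul_eq_zero.mp e01 with h | h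
    · exact absurd h ha.ne'
    · exact h
  have hsv : s * v = 1 := by rw [ht] at hdetS; linarith
  have hs1 : s = 1 := by
    rcases Int.isUnit_iff.mp (IsUnit.of_mul_eq_one v hsv) with h | h
    · exact h
    · exfalso; rw [h] at e00; nlinarith
  have hv1 : v = 1 := by rw [hs1, one_mul] at hsv; exact hsv
  have hcc : c = c' := by rw [ht, hv1] at e11; linarith
  have hcpos : 0 < c := lt_of_le_of_lt hb hbc
  have hu : u = 0 := by
    have hbb : b + c * u = b' := by rw [hs1] at e10; linarith
    rcases lt_trichotomy u 0 with h | h | h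
    · nlinarith
    · exact h
    · nlinarith
  refine ⟨by rw [← e00, hs1, mul_one], ?_, hcc⟩
  rw [hs1, hu] at e10; linarith

lemma exists_nf' (d : ℤ) (hd : 1 ≤ d) (M : Matrix (Fin 2) (Fin 2) ℤ) (hM : M.det = d) :
    ∃ p : ℤ × ℤ × ℤ, (∃ S : SL2, M * S = !![p.1, 0; p.2.1, p.2.2]) ∧
      0 < p.1 ∧ 0 ≤ p.2.1 ∧ p.2.1 < p.2.2 := by
  obtain ⟨S, a, b, c, h1, h2, h3, h4⟩ := exists_nf d hd _ M hM rfl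
  exact ⟨(a, b, c), ⟨S, h1⟩, h2, h3, h4⟩

noncomputable def nf (d : ℤ) (hd : 1 ≤ d) (M : Matrix (Fin 2) (Fin 2) ℤ) (hM : M.det = d) :
    ℤ × ℤ × ℤ := (exists_nf' d hd M hM).choose

lemma nf_spec (d : ℤ) (hd : 1 ≤ d) (M : Matrix (Fin 2) (Fin 2) ℤ) (hM : M.det = d) :
    (∃ S : SL2, M * S = !![(nf d hd M hM).1, 0; (nf d hd M hM).2.1, (nf d hd M hM).2.2]) ∧
      0 < (nf d hd M hM).1 ∧ 0 ≤ (nf d hd M hM).2.1 ∧ (nf d hd M hM).2.1 < (nf d hd M hM).2.2 :=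
  (exists_nf' d hd M hM).choose_spec

/-- invariance of the normal form under the action -/
lemma nf_invariant (d : ℤ) (hd : 1 ≤ d) (M N : Matrix (Fin 2) (Fin 2) ℤ)
    (hM : M.det = d) (hN : N.det = d) (S₀ : SL2) (h : N = M * S₀) :
    nf d hd M hM = nf d hd N hN := by
  obtain ⟨⟨S, hS⟩, ha, hb, hbc⟩ := nf_spec d hd M hM
  obtain ⟨⟨S', hS'⟩, ha', hb', hbc'⟩ := nf_spec d hd N hN
  set p := nf d hd M hM
  set p' := nf d hd N hN
  have key : !![p.1, 0; p.2.1, p.2.2] * ((S⁻¹ * S₀ * S' : SL2) : Matrix (Fin 2) (Fin 2) ℤ)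
      = !![p'.1, 0; p'.2.1, p'.2.2] := by
    rw [← hS, ← hS']
    rw [h]
    rw [Matrix.mul_assoc]
    rw [← Matrix.SpecialLinearGroup.coe_mul, ← mul_assoc, ← mul_assoc, mul_inv_cancel,
      one_mul, Matrix.SpecialLinearGroup.coe_mul, ← Matrix.mul_assoc]
  obtain ⟨h1, h2, h3⟩ := nf_unique _ ha hb hbc ha' hb' hbc' key
  exact Prod.ext h1 (Prod.ext h2 h3)

/-- nf of a matrix already in normal form -/
lemma nf_self (d : ℤ) (hd : 1 ≤ d) (a b c : ℤ) (ha : 0 < a) (hb : 0 ≤ b) (hbc : b < c)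
    (hM : (!![a, 0; b, c] : Matrix (Fin 2) (Fin 2) ℤ).det = d) :
    nf d hd !![a, 0; b, c] hM = (a, b, c) := by
  obtain ⟨⟨S, hS⟩, ha', hb', hbc'⟩ := nf_spec d hd !![a, 0; b, c] hM
  obtain ⟨h1, h2, h3⟩ := nf_unique S ha hb hbc ha' hb' hbc' hS
  exact (Prod.ext h1 (Prod.ext h2 h3)).symm

/-- determinant relation for the nf -/
lemma nf_det (d : ℤ) (hd : 1 ≤ d) (M : Matrix (Fin 2) (Fin 2) ℤ) (hM : M.det = d) :
    (nf d hd M hM).1 * (nf d hd M hM).2.2 = d := by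
  obtain ⟨⟨S, hS⟩, _, _, _⟩ := nf_spec d hd M hM
  have := congrArg Matrix.det hS
  rw [Matrix.det_mul, S.prop, mul_one, hM, Matrix.det_fin_two_of] at this
  linarith

noncomputable def fwd (d : ℤ) (hd : 1 ≤ d) (M : {M : Matrix (Fin 2) (Fin 2) ℤ // M.det = d}) :
    Σ _ : ℕ, ℕ := ⟨(nf d hd M.1 M.2).2.2.toNat, (nf d hd M.1 M.2).2.1.toNat⟩

lemma fwd_mem (d : ℤ) (hd : 1 ≤ d) (M : {M : Matrix (Fin 2) (Fin 2) ℤ // M.det = d}) :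
    fwd d hd M ∈ (d.toNat).divisors.sigma fun c => Finset.range c := by
  obtain ⟨_, ha, hb, hbc⟩ := nf_spec d hd M.1 M.2
  have hac := nf_det d hd M.1 M.2
  have hc : 0 < (nf d hd M.1 M.2).2.2 := lt_of_le_of_lt hb hbc
  unfold fwd
  refine Finset.mem_sigma.mpr ⟨Nat.mem_divisors.mpr ⟨?_, by omega⟩, Finset.mem_range.mpr ?_⟩
  · show (nf d hd M.1 M.2).2.2.toNat ∣ d.toNat
    rw [← Int.natCast_dvd_natCast, Int.toNat_of_nonneg hc.le, Int.toNat_of_nonneg (by omega)]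
    exact ⟨(nf d hd M.1 M.2).1, by linarith⟩
  · show (nf d hd M.1 M.2).2.1.toNat < (nf d hd M.1 M.2).2.2.toNat
    omega

theorem stmt_3 (d : ℤ) (hd : 1 ≤ d) :
    Nat.card (Quot (fun A B : {M : Matrix (Fin 2) (Fin 2) ℤ // M.det = d} =>
      ∃ S : Matrix.SpecialLinearGroup (Fin 2) ℤ,
        (B : Matrix (Fin 2) (Fin 2) ℤ) = (A : Matrix (Fin 2) (Fin 2) ℤ) * S))
      = ∑ k ∈ (d.toNat).divisors, k := by
  classical
  have hT : Nat.card ↥((d.toNat).divisors.sigma fun c => Finset.range c)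
      = ∑ k ∈ (d.toNat).divisors, k := by
    rw [Nat.card_eq_finsetCard, Finset.card_sigma]
    simp
  rw [← hT]
  set r : {M : Matrix (Fin 2) (Fin 2) ℤ // M.det = d} →
      {M : Matrix (Fin 2) (Fin 2) ℤ // M.det = d} → Prop := fun A B =>
    ∃ S : Matrix.SpecialLinearGroup (Fin 2) ℤ,
      (B : Matrix (Fin 2) (Fin 2) ℤ) = (A : Matrix (Fin 2) (Fin 2) ℤ) * S with hr
  have wd : ∀ A B, r A B →
      (⟨fwd d hd A, fwd_mem d hd A⟩ : ↥((d.toNat).divisors.sigma fun c => Finset.range c))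
        = ⟨fwd d hd B, fwd_mem d hd B⟩ := by
    rintro A B ⟨S, hS⟩
    have hinv := nf_invariant d hd A.1 B.1 A.2 B.2 S hS
    apply Subtype.ext
    show fwd d hd A = fwd d hd B
    unfold fwd
    exact congrArg (fun p : ℤ × ℤ × ℤ => (⟨p.2.2.toNat, p.2.1.toNat⟩ : Σ _ : ℕ, ℕ)) hinv
  have mkdet : ∀ x : ↥((d.toNat).divisors.sigma fun c => Finset.range c),
      (!![d / ((x.1.1 : ℤ)), 0; ((x.1.2 : ℤ)), ((x.1.1 : ℤ))] :
      Matrix (Fin 2) (Fin 2) ℤ).det = d := by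
    intro x
    obtain ⟨hmem, -⟩ := Finset.mem_sigma.mp x.2
    obtain ⟨hdvd, hne⟩ := Nat.mem_divisors.mp hmem
    have hdvd' : (x.1.1 : ℤ) ∣ d := by
      have := Int.natCast_dvd_natCast.mpr hdvd
      rwa [Int.toNat_of_nonneg (by omega)] at this
    rw [Matrix.det_fin_two_of, Int.ediv_mul_cancel hdvd']
    ring
  have hcpos : ∀ x : ↥((d.toNat).divisors.sigma fun c => Finset.range c), 0 < (x.1.1 : ℤ) := by
    intro x
    obtain ⟨hmem, -⟩ := Finset.mem_sigma.mp x.2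
    exact_mod_cast Nat.pos_of_mem_divisors hmem
  have hapos : ∀ x : ↥((d.toNat).divisors.sigma fun c => Finset.range c),
      0 < d / (x.1.1 : ℤ) := by
    intro x
    have h1 := mkdet x
    rw [Matrix.det_fin_two_of] at h1
    nlinarith [hcpos x]
  have hblt : ∀ x : ↥((d.toNat).divisors.sigma fun c => Finset.range c),
      (x.1.2 : ℤ) < (x.1.1 : ℤ) := by
    intro x
    obtain ⟨-, hmem⟩ := Finset.mem_sigma.mp x.2
    exact_mod_cast Finset.mem_range.mp hmem
  refine Nat.card_congr
    ⟨Quot.lift (fun M => ⟨fwd d hd M, fwd_mem d hd M⟩) wd,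
     fun x => Quot.mk r ⟨_, mkdet x⟩, ?_, ?_⟩
  · -- left inverse
    apply Quot.ind
    intro M
    show Quot.mk r ⟨_, mkdet ⟨fwd d hd M, fwd_mem d hd M⟩⟩ = Quot.mk r M
    obtain ⟨⟨S, hS⟩, ha, hb, hbc⟩ := nf_spec d hd M.1 M.2
    have hac := nf_det d hd M.1 M.2
    set p := nf d hd M.1 M.2 with hp
    have hc : 0 < p.2.2 := lt_of_le_of_lt hb hbc
    refine (Quot.sound ⟨S, ?_⟩).symm
    show (!![d / (((fwd d hd M).1 : ℤ)), 0; (((fwd d hd M).2 : ℤ)), (((fwd d hd M).1 : ℤ))] :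
      Matrix (Fin 2) (Fin 2) ℤ) = M.1 * S
    rw [hS]
    unfold fwd
    rw [← hp, Int.toNat_of_nonneg hc.le, Int.toNat_of_nonneg hb]
    have hdc : d / p.2.2 = p.1 := by
      conv_lhs => rw [← hac]
      exact Int.mul_ediv_cancel _ (ne_of_gt hc)
    rw [hdc]
  · -- right inverse
    intro x
    show (⟨fwd d hd ⟨_, mkdet x⟩, fwd_mem d hd ⟨_, mkdet x⟩⟩ :
      ↥((d.toNat).divisors.sigma fun c => Finset.range c)) = x
    apply Subtype.ext
    show fwd d hd ⟨_, mkdet x⟩ = x.1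
    unfold fwd
    rw [nf_self d hd _ _ _ (hapos x) (by exact_mod_cast Nat.zero_le _) (hblt x) (mkdet x)]
    simp only [Int.toNat_natCast]
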